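/- Let V ∈ ℝ^{n×n} be symmetric with nonnegative entries, a > 0, and Y ∈ ℝ^{n×d} with rows y_1,…,y_n. Then the Cauchy-kernel attractive term satisfies the error bound |∑_{i≠j} v_{ij} log(1 + a‖y_i − y_j‖²) − 2a · tr(Yᵀ L(V) Y)| ≤ (a²/2) · ∑_{i≠j} v_{ij} ‖y_i − y_j‖⁴, where L(V) = D_V − V is the combinatorial graph Laplacian. -/

import Mathlib

open Matrix

/-- The diagonal degree matrix `D_W` with `(D_W)_{ii} = ∑_j W_{ij}`. -/
noncomputable def degreeMatrix {n : ℕ} (W : Matrix (Fin n) (Fin n) ℝ) :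
    Matrix (Fin n) (Fin n) ℝ :=
  Matrix.diagonal fun i => ∑ j, W i j

/-- The combinatorial graph Laplacian `L(W) = D_W - W`. -/
noncomputable def lap {n : ℕ} (W : Matrix (Fin n) (Fin n) ℝ) :
    Matrix (Fin n) (Fin n) ℝ :=
  degreeMatrix W - W

/-- The squared Euclidean distance `‖Z_i - Z_j‖²` between rows `i` and `j` of `Z`. -/
noncomputable def rowDistSq {n d : ℕ} (Z : Matrix (Fin n) (Fin d) ℝ) (i j : Fin n) : ℝ :=
  ‖(EuclideanSpace.equiv (Fin d) ℝ).symm (fun k => Z i k - Z j k)‖ ^ 2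

lemma rowDistSq_eq {n d : ℕ} (Z : Matrix (Fin n) (Fin d) ℝ) (i j : Fin n) :
    rowDistSq Z i j = ∑ k, (Z i k - Z j k)^2 := by
  unfold rowDistSq
  rw [EuclideanSpace.norm_eq, Real.sq_sqrt (by positivity)]
  simp [sq_abs]

lemma log_approx {x : ℝ} (hx : 0 ≤ x) : |Real.log (1+x) - x| ≤ x^2/2 := by
  have h1 : Real.log (1+x) ≤ x := by
    have := Real.log_le_sub_one_of_pos (by linarith : (0:ℝ) < 1+x)
    linarith
  have h2 : x - x^2/2 ≤ Real.log (1+x) := by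
    set f : ℝ → ℝ := fun t => t^2/2 - t + Real.log (1+t) with hf
    have hderiv : ∀ t : ℝ, 0 < t → HasDerivAt f (t - 1 + (1+t)⁻¹) t := by
      intro t ht
      have h1t : (1:ℝ) + t ≠ 0 := by linarith
      have hlog : HasDerivAt (fun s : ℝ => Real.log (1+s)) (1/(1+t)) t := by
        have := (((hasDerivAt_id t).const_add 1).log h1t)
        simpa using this
      have hpoly : HasDerivAt (fun s : ℝ => s^2/2 - s) (t - 1) t := by
        have := ((hasDerivAt_pow 2 t).div_const 2).sub (hasDerivAt_id t)
        simpa [mul_comm, Pi.sub_def] using this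
      have := hpoly.add hlog
      simpa [hf, one_div, Pi.add_def] using this
    have hmono : MonotoneOn f (Set.Ici 0) := by
      apply monotoneOn_of_deriv_nonneg (convex_Ici 0)
      · apply ContinuousOn.add (by fun_prop)
        apply ContinuousOn.log (by fun_prop)
        intro t ht
        simp only [Set.mem_Ici] at ht; intro h; linarith
      · intro t ht
        rw [interior_Ici] at ht
        exact ((hderiv t ht).differentiableAt).differentiableWithinAt
      · intro t ht
        rw [interior_Ici] at ht
        rw [(hderiv t ht).deriv]
        have ht' : (0:ℝ) < 1 + t := by simp only [Set.mem_Ioi] at ht; linarith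
        have h0 : (1:ℝ) + t ≠ 0 := ne_of_gt ht'
        have : t - 1 + (1+t)⁻¹ = t^2/(1+t) := by field_simp; ring
        rw [this]; positivity
    have := hmono (Set.self_mem_Ici) (Set.mem_Ici.mpr hx) hx
    simp [hf] at this
    linarith
  rw [abs_le]; constructor <;> linarith

lemma sum_swap3' {α β γ : Type*} [Fintype α] [Fintype β] [Fintype γ]
    (f : α → β → γ → ℝ) :
    ∑ k : γ, ∑ i : α, ∑ j : β, f i j k = ∑ i : α, ∑ j : β, ∑ k : γ, f i j k := by
  rw [Finset.sum_comm]
  exact Finset.sum_congr rfl fun i _ => Finset.sum_comm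

lemma sum_swap3 {α β γ : Type*} [Fintype α] [Fintype β] [Fintype γ]
    (f : α → β → γ → ℝ) :
    ∑ k : γ, ∑ j : β, ∑ i : α, f i j k = ∑ i : α, ∑ j : β, ∑ k : γ, f i j k := by
  have h1 : ∀ k : γ, ∑ j : β, ∑ i : α, f i j k = ∑ i : α, ∑ j : β, f i j k :=
    fun k => Finset.sum_comm
  simp_rw [h1]
  exact sum_swap3' f

lemma trace_expand {n d : ℕ} (V : Matrix (Fin n) (Fin n) ℝ)
    (Y : Matrix (Fin n) (Fin d) ℝ) :
    Matrix.trace (Yᵀ * lap V * Y)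
      = (∑ i, ∑ j, ∑ k, V i j * Y i k ^ 2) - ∑ i, ∑ j, ∑ k, V i j * (Y i k * Y j k) := by
  simp only [Matrix.trace, Matrix.diag_apply, Matrix.mul_apply, lap, degreeMatrix,
    Matrix.sub_apply, Matrix.diagonal_apply, Matrix.transpose_apply, sub_mul, mul_sub,
    ite_mul, mul_ite, mul_zero, zero_mul, Finset.sum_sub_distrib,
    Finset.sum_ite_eq', Finset.mem_univ, if_true,
    Finset.sum_mul, Finset.mul_sum]
  congr 1
  · rw [← sum_swap3' (fun i j k => V i j * Y i k ^ 2)]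
    apply Finset.sum_congr rfl; intro k _
    apply Finset.sum_congr rfl; intro i _
    apply Finset.sum_congr rfl; intro j _
    ring
  · rw [← sum_swap3 (fun i j k => V i j * (Y i k * Y j k))]
    apply Finset.sum_congr rfl; intro k _
    apply Finset.sum_congr rfl; intro j _
    apply Finset.sum_congr rfl; intro i _
    ring

theorem umap_cauchy_attraction_error_bound {n d : ℕ}
    (V : Matrix (Fin n) (Fin n) ℝ) (hsymm : V.IsSymm) (hnonneg : ∀ i j, 0 ≤ V i j)
    (a : ℝ) (ha : 0 < a) (Y : Matrix (Fin n) (Fin d) ℝ) :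
    |(∑ i, ∑ j ∈ Finset.univ.filter (fun j => j ≠ i),
          V i j * Real.log (1 + a * rowDistSq Y i j))
        - 2 * a * Matrix.trace (Yᵀ * lap V * Y)|
      ≤ a ^ 2 / 2 * ∑ i, ∑ j ∈ Finset.univ.filter (fun j => j ≠ i),
          V i j * (rowDistSq Y i j) ^ 2 := by
  have hdnn : ∀ i j, 0 ≤ rowDistSq Y i j := fun i j => by
    rw [rowDistSq_eq]; positivity
  have hdiag : ∀ i, rowDistSq Y i i = 0 := fun i => by simp [rowDistSq_eq]
  have hfull : ∀ (f : Fin n → Fin n → ℝ), (∀ i, f i i = 0) →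
      (∑ i, ∑ j ∈ Finset.univ.filter (fun j => j ≠ i), f i j) = ∑ i, ∑ j, f i j := by
    intro f hf
    apply Finset.sum_congr rfl; intro i _
    rw [Finset.sum_filter]
    apply Finset.sum_congr rfl; intro j _
    by_cases h : j = i
    · simp [h, hf]
    · simp [h]
  rw [hfull _ (fun i => by simp [hdiag]), hfull _ (fun i => by simp [hdiag])]
  -- symmetry consequence
  have hS3 : (∑ i, ∑ j, V i j * ∑ k, Y j k ^ 2) = ∑ i, ∑ j, V i j * ∑ k, Y i k ^ 2 := by
    rw [Finset.sum_comm]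
    apply Finset.sum_congr rfl; intro i _
    apply Finset.sum_congr rfl; intro j _
    rw [hsymm.apply i j]
  have key : (∑ i, ∑ j, V i j * rowDistSq Y i j)
      = 2 * ((∑ i, ∑ j, V i j * ∑ k, Y i k ^ 2)
              - ∑ i, ∑ j, V i j * ∑ k, (Y i k * Y j k)) := by
    simp_rw [rowDistSq_eq, Finset.mul_sum]
    have expand_sq : ∀ (i j : Fin n) (k : Fin d),
        V i j * (Y i k - Y j k)^2
          = V i j * Y i k ^ 2 - 2 * (V i j * (Y i k * Y j k)) + V i j * Y j k ^ 2 :=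
      fun i j k => by ring
    simp_rw [expand_sq, Finset.sum_add_distrib, Finset.sum_sub_distrib, ← Finset.mul_sum]
    rw [hS3]; ring
  have htr : 2 * a * Matrix.trace (Yᵀ * lap V * Y)
      = a * ∑ i, ∑ j, V i j * rowDistSq Y i j := by
    rw [trace_expand V Y]
    simp_rw [← Finset.mul_sum]
    rw [key]; ring
  rw [htr]
  have combine : (∑ i, ∑ j, V i j * Real.log (1 + a * rowDistSq Y i j))
        - a * ∑ i, ∑ j, V i j * rowDistSq Y i j
      = ∑ i, ∑ j, V i j * (Real.log (1 + a * rowDistSq Y i j) - a * rowDistSq Y i j) := by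
    rw [Finset.mul_sum, ← Finset.sum_sub_distrib]
    apply Finset.sum_congr rfl; intro i _
    rw [Finset.mul_sum, ← Finset.sum_sub_distrib]
    apply Finset.sum_congr rfl; intro j _
    ring
  rw [combine, Finset.mul_sum]
  calc |∑ i, ∑ j, V i j * (Real.log (1 + a * rowDistSq Y i j) - a * rowDistSq Y i j)|
      ≤ ∑ i, |∑ j, V i j * (Real.log (1 + a * rowDistSq Y i j) - a * rowDistSq Y i j)| :=
        Finset.abs_sum_le_sum_abs _ _
    _ ≤ ∑ i, ∑ j, |V i j * (Real.log (1 + a * rowDistSq Y i j) - a * rowDistSq Y i j)| :=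
        Finset.sum_le_sum fun i _ => Finset.abs_sum_le_sum_abs _ _
    _ ≤ ∑ i, a ^ 2 / 2 * ∑ j, V i j * rowDistSq Y i j ^ 2 := by
        apply Finset.sum_le_sum; intro i _
        rw [Finset.mul_sum]
        apply Finset.sum_le_sum; intro j _
        rw [abs_mul, abs_of_nonneg (hnonneg i j)]
        have hx : 0 ≤ a * rowDistSq Y i j := mul_nonneg ha.le (hdnn i j)
        have := log_approx hx
        calc V i j * |Real.log (1 + a * rowDistSq Y i j) - a * rowDistSq Y i j|
            ≤ V i j * ((a * rowDistSq Y i j)^2 / 2) :=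
              mul_le_mul_of_nonneg_left this (hnonneg i j)
          _ = a ^ 2 / 2 * (V i j * rowDistSq Y i j ^ 2) := by ring
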